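/- Let R ⊆ α × β, S ⊆ β × γ, T ⊆ γ × α be finite relations and let C3 = {(x,y,z) : (x,y) ∈ R, (y,z) ∈ S, (z,x) ∈ T} be the triangle join. Then |C3| ≤ ( (Σ_{x ∈ α} |{y : (x,y) ∈ R}|²) · (Σ_{y ∈ β} |{z : (y,z) ∈ S}|²) · (Σ_{z ∈ γ} |{x : (z,x) ∈ T}|²) )^{1/3}. (The q-inequality |C3| ≤ (‖deg_R(Y|X)‖_2² · ‖deg_S(Z|Y)‖_2² · ‖deg_T(X|Z)‖_2²)^{1/3}.) -/
import Mathlib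

open Finset Real

/-- Weighted Jensen inequality for `Real.log`. -/
private lemma jensen_log {ι : Type*} (s : Finset ι) (w v : ι → ℝ)
    (hw : ∀ i ∈ s, 0 < w i) (hv : ∀ i ∈ s, 0 < v i) :
    ∑ i ∈ s, w i * Real.log (v i) ≤
      (∑ i ∈ s, w i) * Real.log ((∑ i ∈ s, w i * v i) / (∑ i ∈ s, w i)) := by
  rcases s.eq_empty_or_nonempty with rfl | hs
  · simp
  have hW : 0 < ∑ i ∈ s, w i := Finset.sum_pos hw hs
  have h := (strictConcaveOn_log_Ioi.concaveOn).le_map_sum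
      (t := s) (w := fun i => w i / ∑ j ∈ s, w j) (p := v)
      (fun i hi => div_nonneg (hw i hi).le hW.le)
      (by rw [← Finset.sum_div]; exact div_self hW.ne')
      (fun i hi => Set.mem_Ioi.2 (hv i hi))
  have e1 : ∑ i ∈ s, (w i / ∑ j ∈ s, w j) • v i = (∑ i ∈ s, w i * v i) / ∑ j ∈ s, w j := by
    rw [Finset.sum_div]; exact Finset.sum_congr rfl fun i _ => by rw [smul_eq_mul]; ring
  have e2 : ∑ i ∈ s, (w i / ∑ j ∈ s, w j) • Real.log (v i)
      = (∑ i ∈ s, w i * Real.log (v i)) / ∑ j ∈ s, w j := by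
    rw [Finset.sum_div]; exact Finset.sum_congr rfl fun i _ => by rw [smul_eq_mul]; ring
  rw [e1, e2] at h
  calc ∑ i ∈ s, w i * Real.log (v i)
      = (∑ j ∈ s, w j) * ((∑ i ∈ s, w i * Real.log (v i)) / ∑ j ∈ s, w j) := by
        field_simp
    _ ≤ (∑ j ∈ s, w j) * Real.log ((∑ i ∈ s, w i * v i) / ∑ j ∈ s, w j) :=
        mul_le_mul_of_nonneg_left h hW.le

/-- "`H(X) + 2 H(Y|X) ≤ log ∑ deg²`"-type lemma, in counting form. -/
private lemma lemJ {ι κ : Type*} [DecidableEq κ]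
    (Tri : Finset ι) (U : ι → κ) (d : κ → ℝ) (A : ℝ)
    (hd : ∀ t ∈ Tri, 1 ≤ d (U t))
    (hA : ∑ x ∈ Tri.image U, d x ^ 2 ≤ A) :
    (Tri.card : ℝ) * Real.log (Tri.card) +
      ∑ t ∈ Tri, (2 * Real.log (d (U t))
        - Real.log ((Tri.filter (fun s => U s = U t)).card : ℝ))
    ≤ (Tri.card : ℝ) * Real.log A := by
  rcases Tri.eq_empty_or_nonempty with rfl | hne
  · simp
  set n : κ → ℝ := fun x => ((Tri.filter (fun s => U s = x)).card : ℝ) with hn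
  have hnpos : ∀ x ∈ Tri.image U, 0 < n x := by
    intro x hx
    obtain ⟨t, ht, rfl⟩ := Finset.mem_image.1 hx
    have h1 : t ∈ Tri.filter (fun s => U s = U t) := Finset.mem_filter.2 ⟨ht, rfl⟩
    have h2 := Finset.card_pos.2 ⟨t, h1⟩
    simp only [hn]
    exact_mod_cast h2
  have hdpos : ∀ x ∈ Tri.image U, 1 ≤ d x := by
    intro x hx
    obtain ⟨t, ht, rfl⟩ := Finset.mem_image.1 hx
    exact hd t ht
  have hN : (0 : ℝ) < Tri.card := by exact_mod_cast Finset.card_pos.2 hne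
  -- rewrite the triangle sum as a fiber sum
  have hcomp : ∑ t ∈ Tri, (2 * Real.log (d (U t)) - Real.log (n (U t)))
      = ∑ x ∈ Tri.image U, n x * (2 * Real.log (d x) - Real.log (n x)) := by
    rw [Finset.sum_comp (fun x => 2 * Real.log (d x) - Real.log (n x)) U]
    exact Finset.sum_congr rfl fun x _ => by rw [nsmul_eq_mul]
  have hsumn : ∑ x ∈ Tri.image U, n x = (Tri.card : ℝ) := by
    have h := Finset.card_eq_sum_card_image U Tri
    simp only [hn]
    exact_mod_cast h.symm
  -- Jensen with weights n x and values d x ^ 2 * N / n x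
  have hjen := jensen_log (Tri.image U) n
      (fun x => d x ^ 2 * (Tri.card : ℝ) / n x) hnpos
      (fun x hx => by
        have h1 : (0:ℝ) < d x := lt_of_lt_of_le one_pos (hdpos x hx)
        have := hnpos x hx
        positivity)
  have hwv : ∑ x ∈ Tri.image U, n x * (d x ^ 2 * (Tri.card : ℝ) / n x)
      = (∑ x ∈ Tri.image U, d x ^ 2) * (Tri.card : ℝ) := by
    rw [Finset.sum_congr rfl (fun x hx => by
      field_simp [(hnpos x hx).ne'] :
      ∀ x ∈ Tri.image U, n x * (d x ^ 2 * (Tri.card : ℝ) / n x) = d x ^ 2 * (Tri.card : ℝ))]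
    rw [← Finset.sum_mul]
  have hlogv : ∀ x ∈ Tri.image U,
      n x * Real.log (d x ^ 2 * (Tri.card : ℝ) / n x)
        = n x * (2 * Real.log (d x) + Real.log (Tri.card) - Real.log (n x)) := by
    intro x hx
    have h1 : (0:ℝ) < d x := lt_of_lt_of_le one_pos (hdpos x hx)
    have h2 := hnpos x hx
    rw [Real.log_div (by positivity) h2.ne', Real.log_mul (by positivity) hN.ne',
      Real.log_pow]
    norm_num
  rw [Finset.sum_congr rfl hlogv, hwv, hsumn, mul_div_assoc,
    div_self hN.ne', mul_one] at hjen
  have hApos : (0:ℝ) < ∑ x ∈ Tri.image U, d x ^ 2 := by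
    obtain ⟨t, ht⟩ := hne
    refine Finset.sum_pos (fun x hx => ?_) ⟨U t, Finset.mem_image_of_mem U ht⟩
    have h1 : (0:ℝ) < d x := lt_of_lt_of_le one_pos (hdpos x hx)
    positivity
  have hlogA : Real.log (∑ x ∈ Tri.image U, d x ^ 2) ≤ Real.log A :=
    Real.log_le_log hApos hA
  have hexp : ∑ x ∈ Tri.image U, n x * (2 * Real.log (d x) + Real.log (Tri.card) - Real.log (n x))
      = (∑ x ∈ Tri.image U, n x * (2 * Real.log (d x) - Real.log (n x)))
        + (Tri.card : ℝ) * Real.log (Tri.card) := by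
    rw [Finset.sum_congr rfl (fun x _ => by ring :
      ∀ x ∈ Tri.image U, n x * (2 * Real.log (d x) + Real.log (Tri.card) - Real.log (n x))
        = n x * (2 * Real.log (d x) - Real.log (n x)) + n x * Real.log (Tri.card)),
      Finset.sum_add_distrib, ← Finset.sum_mul, hsumn]
  rw [hexp] at hjen
  rw [hcomp]
  nlinarith [mul_le_mul_of_nonneg_left hlogA hN.le]

/-- "`H(Y|X) ≤ E log deg`"-type lemma, in counting form. -/
private lemma lemP {ι κ₁ κ₂ : Type*} [DecidableEq κ₁] [DecidableEq κ₂]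
    (Tri : Finset ι) (U : ι → κ₁) (V : ι → κ₂) (d : κ₁ → ℝ)
    (hd : ∀ t ∈ Tri, (((Tri.filter (fun s => U s = U t)).image V).card : ℝ) ≤ d (U t)) :
    ∑ t ∈ Tri, (Real.log ((Tri.filter (fun s => U s = U t)).card : ℝ)
        - Real.log ((Tri.filter (fun s => U s = U t ∧ V s = V t)).card : ℝ))
      ≤ ∑ t ∈ Tri, Real.log (d (U t)) := by
  rw [← Finset.sum_fiberwise_of_maps_to (fun t ht => Finset.mem_image_of_mem U ht)
      (fun t => Real.log ((Tri.filter (fun s => U s = U t)).card : ℝ)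
        - Real.log ((Tri.filter (fun s => U s = U t ∧ V s = V t)).card : ℝ)),
    ← Finset.sum_fiberwise_of_maps_to (fun t ht => Finset.mem_image_of_mem U ht)
      (fun t => Real.log (d (U t)))]
  refine Finset.sum_le_sum fun x hx => ?_
  obtain ⟨t0, ht0, hUt0⟩ := Finset.mem_image.1 hx
  set fib : Finset ι := Tri.filter (fun t => U t = x) with hfib
  have ht0f : t0 ∈ fib := Finset.mem_filter.2 ⟨ht0, hUt0⟩
  set n1 : ℝ := ((Tri.filter (fun s => U s = x)).card : ℝ) with hn1
  set m : κ₂ → ℝ := fun y => ((Tri.filter (fun s => U s = x ∧ V s = y)).card : ℝ) with hm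
  have hn1pos : 0 < n1 := by
    have h1 : (Tri.filter (fun s => U s = x)).Nonempty := ⟨t0, Finset.mem_filter.2 ⟨ht0, hUt0⟩⟩
    have h2 := Finset.card_pos.2 h1
    simp only [hn1]
    exact_mod_cast h2
  have hL : ∑ t ∈ fib, (Real.log ((Tri.filter (fun s => U s = U t)).card : ℝ)
        - Real.log ((Tri.filter (fun s => U s = U t ∧ V s = V t)).card : ℝ))
      = ∑ t ∈ fib, (Real.log n1 - Real.log (m (V t))) := by
    refine Finset.sum_congr rfl fun t ht => ?_
    have hUt : U t = x := (Finset.mem_filter.1 ht).2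
    rw [hUt]
  have hR : ∑ t ∈ fib, Real.log (d (U t)) = ∑ t ∈ fib, Real.log (d x) := by
    refine Finset.sum_congr rfl fun t ht => ?_
    have hUt : U t = x := (Finset.mem_filter.1 ht).2
    rw [hUt]
  rw [hL, hR]
  -- group the LHS by the value of V
  have hff : ∀ y : κ₂, fib.filter (fun a => V a = y)
      = Tri.filter (fun s => U s = x ∧ V s = y) := by
    intro y; rw [hfib, Finset.filter_filter]
  have hgrp : ∑ t ∈ fib, (Real.log n1 - Real.log (m (V t)))
      = ∑ y ∈ fib.image V, m y * (Real.log n1 - Real.log (m y)) := by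
    rw [Finset.sum_comp (fun y => Real.log n1 - Real.log (m y)) V]
    refine Finset.sum_congr rfl fun y _ => ?_
    rw [nsmul_eq_mul, hff y]
  have hmpos : ∀ y ∈ fib.image V, 0 < m y := by
    intro y hy
    obtain ⟨t, ht, rfl⟩ := Finset.mem_image.1 hy
    have htT := (Finset.mem_filter.1 ht).1
    have hUt : U t = x := (Finset.mem_filter.1 ht).2
    have h1 : t ∈ Tri.filter (fun s => U s = x ∧ V s = V t) :=
      Finset.mem_filter.2 ⟨htT, hUt, rfl⟩
    have h2 := Finset.card_pos.2 ⟨t, h1⟩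
    simp only [hm]
    exact_mod_cast h2
  have hsumw : ∑ y ∈ fib.image V, m y = n1 := by
    have h := Finset.card_eq_sum_card_image V fib
    simp only [hff] at h
    rw [hfib] at h
    simp only [hm, hn1]
    exact_mod_cast h.symm
  have hjen := jensen_log (fib.image V) m (fun y => n1 / m y) hmpos
      (fun y hy => div_pos hn1pos (hmpos y hy))
  have hlv : ∀ y ∈ fib.image V, m y * Real.log (n1 / m y)
      = m y * (Real.log n1 - Real.log (m y)) := fun y hy => by
    rw [Real.log_div hn1pos.ne' (hmpos y hy).ne']
  have hwv : ∑ y ∈ fib.image V, m y * (n1 / m y) = ((fib.image V).card : ℝ) * n1 := by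
    rw [Finset.sum_congr rfl (fun y hy => by
      field_simp [(hmpos y hy).ne'] : ∀ y ∈ fib.image V, m y * (n1 / m y) = n1)]
    rw [Finset.sum_const, nsmul_eq_mul]
  rw [Finset.sum_congr rfl hlv, hwv, hsumw, mul_div_assoc, div_self hn1pos.ne',
    mul_one] at hjen
  have hcard : (0:ℝ) < ((fib.image V).card : ℝ) := by
    have : (fib.image V).Nonempty := ⟨V t0, Finset.mem_image_of_mem V ht0f⟩
    exact_mod_cast Finset.card_pos.2 this
  have hcd : ((fib.image V).card : ℝ) ≤ d x := by
    have := hd t0 ht0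
    rw [hUt0] at this
    exact this
  have : n1 * Real.log ((fib.image V).card : ℝ) ≤ n1 * Real.log (d x) :=
    mul_le_mul_of_nonneg_left (Real.log_le_log hcard hcd) hn1pos.le
  calc ∑ t ∈ fib, (Real.log n1 - Real.log (m (V t)))
      = ∑ y ∈ fib.image V, m y * (Real.log n1 - Real.log (m y)) := hgrp
    _ ≤ n1 * Real.log ((fib.image V).card : ℝ) := hjen
    _ ≤ n1 * Real.log (d x) := this
    _ = ∑ t ∈ fib, Real.log (d x) := by
        rw [Finset.sum_const, nsmul_eq_mul]

/-- "`H(Z|XY) + H(X|... ) ≤ H at the middle vertex`"-type (Shannon) lemma, counting form. -/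
private lemma lemQ {ι κ κ₁ κ₂ : Type*} [DecidableEq κ] [DecidableEq κ₁] [DecidableEq κ₂]
    [Fintype κ₁] [Fintype κ₂]
    (Tri : Finset ι) (U : ι → κ) (P : ι → κ₁) (Q : ι → κ₂)
    (hinj : ∀ t ∈ Tri, ∀ t' ∈ Tri, U t = U t' → P t = P t' → Q t = Q t' → t = t') :
    ∑ t ∈ Tri, (Real.log ((Tri.filter (fun s => U s = U t ∧ P s = P t)).card : ℝ)
        + Real.log ((Tri.filter (fun s => U s = U t ∧ Q s = Q t)).card : ℝ))
      ≤ ∑ t ∈ Tri, Real.log ((Tri.filter (fun s => U s = U t)).card : ℝ) := by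
  rw [← Finset.sum_fiberwise_of_maps_to (fun t ht => Finset.mem_image_of_mem U ht)
      (fun t => Real.log ((Tri.filter (fun s => U s = U t ∧ P s = P t)).card : ℝ)
        + Real.log ((Tri.filter (fun s => U s = U t ∧ Q s = Q t)).card : ℝ)),
    ← Finset.sum_fiberwise_of_maps_to (fun t ht => Finset.mem_image_of_mem U ht)
      (fun t => Real.log ((Tri.filter (fun s => U s = U t)).card : ℝ))]
  refine Finset.sum_le_sum fun u hu => ?_
  obtain ⟨t0, ht0, hUt0⟩ := Finset.mem_image.1 hu
  set fib : Finset ι := Tri.filter (fun t => U t = u) with hfib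
  have ht0f : t0 ∈ fib := Finset.mem_filter.2 ⟨ht0, hUt0⟩
  have hfne : fib.Nonempty := ⟨t0, ht0f⟩
  set n : ℝ := ((Tri.filter (fun s => U s = u)).card : ℝ) with hn
  set mP : κ₁ → ℝ := fun p => ((Tri.filter (fun s => U s = u ∧ P s = p)).card : ℝ) with hmP
  set mQ : κ₂ → ℝ := fun q => ((Tri.filter (fun s => U s = u ∧ Q s = q)).card : ℝ) with hmQ
  have hnpos : 0 < n := by
    have h1 : (Tri.filter (fun s => U s = u)).Nonempty := ⟨t0, Finset.mem_filter.2 ⟨ht0, hUt0⟩⟩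
    have h2 := Finset.card_pos.2 h1
    simp only [hn]
    exact_mod_cast h2
  have hmPpos : ∀ t ∈ fib, 0 < mP (P t) := by
    intro t ht
    have htT := (Finset.mem_filter.1 ht).1
    have hUt : U t = u := (Finset.mem_filter.1 ht).2
    have h1 : t ∈ Tri.filter (fun s => U s = u ∧ P s = P t) :=
      Finset.mem_filter.2 ⟨htT, hUt, rfl⟩
    have h2 := Finset.card_pos.2 ⟨t, h1⟩
    simp only [hmP]
    exact_mod_cast h2
  have hmQpos : ∀ t ∈ fib, 0 < mQ (Q t) := by
    intro t ht
    have htT := (Finset.mem_filter.1 ht).1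
    have hUt : U t = u := (Finset.mem_filter.1 ht).2
    have h1 : t ∈ Tri.filter (fun s => U s = u ∧ Q s = Q t) :=
      Finset.mem_filter.2 ⟨htT, hUt, rfl⟩
    have h2 := Finset.card_pos.2 ⟨t, h1⟩
    simp only [hmQ]
    exact_mod_cast h2
  have hL : ∑ t ∈ fib, (Real.log ((Tri.filter (fun s => U s = U t ∧ P s = P t)).card : ℝ)
        + Real.log ((Tri.filter (fun s => U s = U t ∧ Q s = Q t)).card : ℝ))
      = ∑ t ∈ fib, Real.log (mP (P t) * mQ (Q t)) := by
    refine Finset.sum_congr rfl fun t ht => ?_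
    have hUt : U t = u := (Finset.mem_filter.1 ht).2
    rw [hUt, Real.log_mul (hmPpos t ht).ne' (hmQpos t ht).ne']
  have hR : ∑ t ∈ fib, Real.log ((Tri.filter (fun s => U s = U t)).card : ℝ)
      = n * Real.log n := by
    rw [Finset.sum_congr rfl (fun t ht => by
      rw [(Finset.mem_filter.1 ht).2] :
        ∀ t ∈ fib, Real.log ((Tri.filter (fun s => U s = U t)).card : ℝ) = Real.log n)]
    rw [Finset.sum_const, nsmul_eq_mul]
  rw [hL, hR]
  -- the key counting bound : ∑_{t ∈ fib} mP (P t) * mQ (Q t) ≤ n * n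
  have hffP : ∀ p : κ₁, fib.filter (fun a => P a = p)
      = Tri.filter (fun s => U s = u ∧ P s = p) := by
    intro p; rw [hfib, Finset.filter_filter]
  have hffQ : ∀ q : κ₂, fib.filter (fun a => Q a = q)
      = Tri.filter (fun s => U s = u ∧ Q s = q) := by
    intro q; rw [hfib, Finset.filter_filter]
  have hsumP : ∑ p, mP p = n := by
    have h : fib.card = ∑ p ∈ (Finset.univ : Finset κ₁), (fib.filter (fun a => P a = p)).card :=
      Finset.card_eq_sum_card_fiberwise fun t _ => Finset.mem_univ (P t)
    simp only [hffP] at h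
    rw [hfib] at h
    simp only [hmP, hn]
    exact_mod_cast h.symm
  have hsumQ : ∑ q, mQ q = n := by
    have h : fib.card = ∑ q ∈ (Finset.univ : Finset κ₂), (fib.filter (fun a => Q a = q)).card :=
      Finset.card_eq_sum_card_fiberwise fun t _ => Finset.mem_univ (Q t)
    simp only [hffQ] at h
    rw [hfib] at h
    simp only [hmQ, hn]
    exact_mod_cast h.symm
  have hkey : ∑ t ∈ fib, mP (P t) * mQ (Q t) ≤ n * n := by
    have hinj' : ∀ t ∈ fib, ∀ t' ∈ fib, (P t, Q t) = (P t', Q t') → t = t' := by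
      intro t ht t' ht' hpq
      have h1 := (Finset.mem_filter.1 ht)
      have h2 := (Finset.mem_filter.1 ht')
      exact hinj t h1.1 t' h2.1 (h1.2.trans h2.2.symm)
        (congrArg Prod.fst hpq) (congrArg Prod.snd hpq)
    have himg : ∑ pr ∈ fib.image (fun t => (P t, Q t)), mP pr.1 * mQ pr.2
        = ∑ t ∈ fib, mP (P t) * mQ (Q t) := Finset.sum_image hinj'
    rw [← himg]
    calc ∑ pr ∈ fib.image (fun t => (P t, Q t)), mP pr.1 * mQ pr.2
        ≤ ∑ pr ∈ (Finset.univ : Finset (κ₁ × κ₂)), mP pr.1 * mQ pr.2 := by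
          refine Finset.sum_le_sum_of_subset_of_nonneg (Finset.subset_univ _)
            fun pr _ _ => ?_
          have h1 : (0:ℝ) ≤ mP pr.1 := by simp only [hmP]; exact Nat.cast_nonneg _
          have h2 : (0:ℝ) ≤ mQ pr.2 := by simp only [hmQ]; exact Nat.cast_nonneg _
          exact mul_nonneg h1 h2
      _ = (∑ p, mP p) * (∑ q, mQ q) := by
          rw [Finset.sum_mul_sum]
          rw [Fintype.sum_prod_type]
      _ = n * n := by rw [hsumP, hsumQ]
  -- Jensen with unit weights
  have hjen := jensen_log fib (fun _ => (1:ℝ)) (fun t => mP (P t) * mQ (Q t))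
      (fun t _ => one_pos) (fun t ht => mul_pos (hmPpos t ht) (hmQpos t ht))
  simp only [one_mul] at hjen
  have hcardfib : (∑ _t ∈ fib, (1:ℝ)) = n := by
    rw [Finset.sum_const, nsmul_eq_mul, mul_one]
  rw [hcardfib] at hjen
  have hvpos : 0 < ∑ t ∈ fib, mP (P t) * mQ (Q t) :=
    Finset.sum_pos (fun t ht => mul_pos (hmPpos t ht) (hmQpos t ht)) hfne
  have harg : (∑ t ∈ fib, mP (P t) * mQ (Q t)) / n ≤ n := by
    rw [div_le_iff₀ hnpos]; exact hkey
  have hargpos : 0 < (∑ t ∈ fib, mP (P t) * mQ (Q t)) / n := div_pos hvpos hnpos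
  calc ∑ t ∈ fib, Real.log (mP (P t) * mQ (Q t))
      ≤ n * Real.log ((∑ t ∈ fib, mP (P t) * mQ (Q t)) / n) := hjen
    _ ≤ n * Real.log n :=
        mul_le_mul_of_nonneg_left (Real.log_le_log hargpos harg) hnpos.le

/-- Taking cube roots in an inequality. -/
private lemma cube_root_bound {x y : ℝ} (hx : 0 < x) (h : x ^ (3:ℕ) ≤ y) :
    x ≤ y ^ ((1:ℝ)/3) := by
  have hx' : x = (x ^ (3:ℕ)) ^ ((1:ℝ)/3) := by
    rw [← Real.rpow_natCast x 3, ← Real.rpow_mul hx.le]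
    norm_num
  rw [hx']
  exact Real.rpow_le_rpow (by positivity) h (by norm_num)

/-- The q-inequality
`|C3| ≤ (‖deg_R(Y|X)‖_2² · ‖deg_S(Z|Y)‖_2² · ‖deg_T(X|Z)‖_2²)^{1/3}`
for the triangle join. -/
theorem triangle_l2_bound {α β γ : Type*} [Fintype α] [Fintype β] [Fintype γ]
    [DecidableEq α] [DecidableEq β] [DecidableEq γ]
    (R : Finset (α × β)) (S : Finset (β × γ)) (T : Finset (γ × α)) :
    ((Finset.univ.filter
        (fun t : α × β × γ =>
          (t.1, t.2.1) ∈ R ∧ (t.2.1, t.2.2) ∈ S ∧ (t.2.2, t.1) ∈ T)).card : ℝ)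
    ≤ ((∑ x, ((R.filter (fun t => t.1 = x)).card : ℝ) ^ 2)
        * (∑ y, ((S.filter (fun t => t.1 = y)).card : ℝ) ^ 2)
        * (∑ z, ((T.filter (fun t => t.1 = z)).card : ℝ) ^ 2)) ^ ((1 : ℝ) / 3) := by
  classical
  set Tri := Finset.univ.filter
      (fun t : α × β × γ =>
        (t.1, t.2.1) ∈ R ∧ (t.2.1, t.2.2) ∈ S ∧ (t.2.2, t.1) ∈ T) with hTri
  set a : α → ℝ := fun x => ((R.filter (fun p => p.1 = x)).card : ℝ) with ha
  set b : β → ℝ := fun y => ((S.filter (fun p => p.1 = y)).card : ℝ) with hb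
  set c : γ → ℝ := fun z => ((T.filter (fun p => p.1 = z)).card : ℝ) with hc
  have hmemR : ∀ t ∈ Tri, (t.1, t.2.1) ∈ R := fun t ht => ((Finset.mem_filter.1 ht).2).1
  have hmemS : ∀ t ∈ Tri, (t.2.1, t.2.2) ∈ S := fun t ht => ((Finset.mem_filter.1 ht).2).2.1
  have hmemT : ∀ t ∈ Tri, (t.2.2, t.1) ∈ T := fun t ht => ((Finset.mem_filter.1 ht).2).2.2
  have hRnonneg : ∀ x, (0:ℝ) ≤ a x := fun x => by simp only [ha]; exact Nat.cast_nonneg _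
  have hSnonneg : ∀ y, (0:ℝ) ≤ b y := fun y => by simp only [hb]; exact Nat.cast_nonneg _
  have hTnonneg : ∀ z, (0:ℝ) ≤ c z := fun z => by simp only [hc]; exact Nat.cast_nonneg _
  have hRpos : ∀ t ∈ Tri, 1 ≤ a t.1 := by
    intro t ht
    have h1 : (t.1, t.2.1) ∈ R.filter (fun p => p.1 = t.1) :=
      Finset.mem_filter.2 ⟨hmemR t ht, rfl⟩
    have h2 := Finset.card_pos.2 ⟨_, h1⟩
    simp only [ha]
    exact_mod_cast h2
  have hSpos : ∀ t ∈ Tri, 1 ≤ b t.2.1 := by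
    intro t ht
    have h1 : (t.2.1, t.2.2) ∈ S.filter (fun p => p.1 = t.2.1) :=
      Finset.mem_filter.2 ⟨hmemS t ht, rfl⟩
    have h2 := Finset.card_pos.2 ⟨_, h1⟩
    simp only [hb]
    exact_mod_cast h2
  have hTpos : ∀ t ∈ Tri, 1 ≤ c t.2.2 := by
    intro t ht
    have h1 : (t.2.2, t.1) ∈ T.filter (fun p => p.1 = t.2.2) :=
      Finset.mem_filter.2 ⟨hmemT t ht, rfl⟩
    have h2 := Finset.card_pos.2 ⟨_, h1⟩
    simp only [hc]
    exact_mod_cast h2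
  set A : ℝ := ∑ x, a x ^ 2 with hA
  set B : ℝ := ∑ y, b y ^ 2 with hB
  set C : ℝ := ∑ z, c z ^ 2 with hC
  have hAnn : (0:ℝ) ≤ A := Finset.sum_nonneg fun x _ => sq_nonneg _
  have hBnn : (0:ℝ) ≤ B := Finset.sum_nonneg fun y _ => sq_nonneg _
  have hCnn : (0:ℝ) ≤ C := Finset.sum_nonneg fun z _ => sq_nonneg _
  have hABCnonneg : (0:ℝ) ≤ A * B * C := mul_nonneg (mul_nonneg hAnn hBnn) hCnn
  rcases Tri.eq_empty_or_nonempty with hemp | hne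
  · rw [hemp]
    simp only [Finset.card_empty, Nat.cast_zero]
    exact Real.rpow_nonneg hABCnonneg _
  obtain ⟨t0, ht0⟩ := hne
  have hNpos : (0:ℝ) < (Tri.card : ℝ) := by
    exact_mod_cast Finset.card_pos.2 ⟨t0, ht0⟩
  set N : ℝ := (Tri.card : ℝ) with hN
  -- the three J inequalities
  have hJ1 : N * Real.log N + ∑ t ∈ Tri, (2 * Real.log (a t.1)
        - Real.log ((Tri.filter (fun s => s.1 = t.1)).card : ℝ)) ≤ N * Real.log A := by
    refine lemJ Tri (fun t => t.1) a A hRpos ?_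
    refine le_trans (Finset.sum_le_sum_of_subset_of_nonneg (Finset.subset_univ _)
      (fun x _ _ => sq_nonneg _)) ?_
    exact le_of_eq rfl
  have hJ2 : N * Real.log N + ∑ t ∈ Tri, (2 * Real.log (b t.2.1)
        - Real.log ((Tri.filter (fun s => s.2.1 = t.2.1)).card : ℝ)) ≤ N * Real.log B := by
    refine lemJ Tri (fun t => t.2.1) b B hSpos ?_
    exact Finset.sum_le_sum_of_subset_of_nonneg (Finset.subset_univ _) fun y _ _ => sq_nonneg _
  have hJ3 : N * Real.log N + ∑ t ∈ Tri, (2 * Real.log (c t.2.2)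
        - Real.log ((Tri.filter (fun s => s.2.2 = t.2.2)).card : ℝ)) ≤ N * Real.log C := by
    refine lemJ Tri (fun t => t.2.2) c C hTpos ?_
    exact Finset.sum_le_sum_of_subset_of_nonneg (Finset.subset_univ _) fun z _ _ => sq_nonneg _
  -- the three P inequalities
  have hP1 : ∑ t ∈ Tri, (Real.log ((Tri.filter (fun s => s.1 = t.1)).card : ℝ)
        - Real.log ((Tri.filter (fun s => s.1 = t.1 ∧ s.2.1 = t.2.1)).card : ℝ))
      ≤ ∑ t ∈ Tri, Real.log (a t.1) := by
    refine lemP Tri (fun t => t.1) (fun t => t.2.1) a ?_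
    intro t ht
    have hsub : (Tri.filter (fun s => s.1 = t.1)).image (fun s => s.2.1)
        ⊆ (R.filter (fun p => p.1 = t.1)).image Prod.snd := by
      intro y hy
      obtain ⟨s, hs, rfl⟩ := Finset.mem_image.1 hy
      have hsT := (Finset.mem_filter.1 hs).1
      have hs1 : s.1 = t.1 := (Finset.mem_filter.1 hs).2
      refine Finset.mem_image.2 ⟨(t.1, s.2.1), Finset.mem_filter.2 ⟨?_, rfl⟩, rfl⟩
      have := hmemR s hsT
      rwa [hs1] at this
    have h1 := Finset.card_le_card hsub
    have h2 := Finset.card_image_le (s := R.filter (fun p => p.1 = t.1)) (f := Prod.snd)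
    simp only [ha]
    exact_mod_cast le_trans h1 h2
  have hP2 : ∑ t ∈ Tri, (Real.log ((Tri.filter (fun s => s.2.1 = t.2.1)).card : ℝ)
        - Real.log ((Tri.filter (fun s => s.2.1 = t.2.1 ∧ s.2.2 = t.2.2)).card : ℝ))
      ≤ ∑ t ∈ Tri, Real.log (b t.2.1) := by
    refine lemP Tri (fun t => t.2.1) (fun t => t.2.2) b ?_
    intro t ht
    have hsub : (Tri.filter (fun s => s.2.1 = t.2.1)).image (fun s => s.2.2)
        ⊆ (S.filter (fun p => p.1 = t.2.1)).image Prod.snd := by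
      intro z hz
      obtain ⟨s, hs, rfl⟩ := Finset.mem_image.1 hz
      have hsT := (Finset.mem_filter.1 hs).1
      have hs1 : s.2.1 = t.2.1 := (Finset.mem_filter.1 hs).2
      refine Finset.mem_image.2 ⟨(t.2.1, s.2.2), Finset.mem_filter.2 ⟨?_, rfl⟩, rfl⟩
      have := hmemS s hsT
      rwa [hs1] at this
    have h1 := Finset.card_le_card hsub
    have h2 := Finset.card_image_le (s := S.filter (fun p => p.1 = t.2.1)) (f := Prod.snd)
    simp only [hb]
    exact_mod_cast le_trans h1 h2
  have hP3 : ∑ t ∈ Tri, (Real.log ((Tri.filter (fun s => s.2.2 = t.2.2)).card : ℝ)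
        - Real.log ((Tri.filter (fun s => s.2.2 = t.2.2 ∧ s.1 = t.1)).card : ℝ))
      ≤ ∑ t ∈ Tri, Real.log (c t.2.2) := by
    refine lemP Tri (fun t => t.2.2) (fun t => t.1) c ?_
    intro t ht
    have hsub : (Tri.filter (fun s => s.2.2 = t.2.2)).image (fun s => s.1)
        ⊆ (T.filter (fun p => p.1 = t.2.2)).image Prod.snd := by
      intro x hx
      obtain ⟨s, hs, rfl⟩ := Finset.mem_image.1 hx
      have hsT := (Finset.mem_filter.1 hs).1
      have hs1 : s.2.2 = t.2.2 := (Finset.mem_filter.1 hs).2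
      refine Finset.mem_image.2 ⟨(t.2.2, s.1), Finset.mem_filter.2 ⟨?_, rfl⟩, rfl⟩
      have := hmemT s hsT
      rwa [hs1] at this
    have h1 := Finset.card_le_card hsub
    have h2 := Finset.card_image_le (s := T.filter (fun p => p.1 = t.2.2)) (f := Prod.snd)
    simp only [hc]
    exact_mod_cast le_trans h1 h2
  -- filter predicate flips
  have e12 : ∀ t : α × β × γ, Tri.filter (fun s => s.2.1 = t.2.1 ∧ s.1 = t.1)
      = Tri.filter (fun s => s.1 = t.1 ∧ s.2.1 = t.2.1) := fun t =>
    Finset.filter_congr fun s _ => and_comm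
  have e23 : ∀ t : α × β × γ, Tri.filter (fun s => s.2.2 = t.2.2 ∧ s.2.1 = t.2.1)
      = Tri.filter (fun s => s.2.1 = t.2.1 ∧ s.2.2 = t.2.2) := fun t =>
    Finset.filter_congr fun s _ => and_comm
  have e31 : ∀ t : α × β × γ, Tri.filter (fun s => s.1 = t.1 ∧ s.2.2 = t.2.2)
      = Tri.filter (fun s => s.2.2 = t.2.2 ∧ s.1 = t.1) := fun t =>
    Finset.filter_congr fun s _ => and_comm
  -- the three Q inequalities
  have hQ1 : ∑ t ∈ Tri, (Real.log ((Tri.filter (fun s => s.1 = t.1 ∧ s.2.2 = t.2.2)).card : ℝ)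
        + Real.log ((Tri.filter (fun s => s.1 = t.1 ∧ s.2.1 = t.2.1)).card : ℝ))
      ≤ ∑ t ∈ Tri, Real.log ((Tri.filter (fun s => s.1 = t.1)).card : ℝ) := by
    refine lemQ Tri (fun t => t.1) (fun t => t.2.2) (fun t => t.2.1) ?_
    intro t _ t' _ h1 h2 h3
    exact Prod.ext h1 (Prod.ext h3 h2)
  have hQ2 : ∑ t ∈ Tri, (Real.log ((Tri.filter (fun s => s.2.1 = t.2.1 ∧ s.1 = t.1)).card : ℝ)
        + Real.log ((Tri.filter (fun s => s.2.1 = t.2.1 ∧ s.2.2 = t.2.2)).card : ℝ))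
      ≤ ∑ t ∈ Tri, Real.log ((Tri.filter (fun s => s.2.1 = t.2.1)).card : ℝ) := by
    refine lemQ Tri (fun t => t.2.1) (fun t => t.1) (fun t => t.2.2) ?_
    intro t _ t' _ h1 h2 h3
    exact Prod.ext h2 (Prod.ext h1 h3)
  have hQ3 : ∑ t ∈ Tri, (Real.log ((Tri.filter (fun s => s.2.2 = t.2.2 ∧ s.2.1 = t.2.1)).card : ℝ)
        + Real.log ((Tri.filter (fun s => s.2.2 = t.2.2 ∧ s.1 = t.1)).card : ℝ))
      ≤ ∑ t ∈ Tri, Real.log ((Tri.filter (fun s => s.2.2 = t.2.2)).card : ℝ) := by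
    refine lemQ Tri (fun t => t.2.2) (fun t => t.2.1) (fun t => t.1) ?_
    intro t _ t' _ h1 h2 h3
    exact Prod.ext h3 (Prod.ext h2 h1)
  simp only [e12] at hQ2
  simp only [e23] at hQ3
  simp only [e31] at hQ1
  -- normalize all sums into linear combinations of atomic sums
  rw [Finset.sum_sub_distrib] at hJ1 hJ2 hJ3 hP1 hP2 hP3
  rw [Finset.sum_add_distrib] at hQ1 hQ2 hQ3
  rw [← Finset.mul_sum] at hJ1 hJ2 hJ3
  -- combine everything
  have hmain : 3 * (N * Real.log N) ≤ N * Real.log A + N * Real.log B + N * Real.log C := by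
    linarith [hJ1, hJ2, hJ3, hP1, hP2, hP3, hQ1, hQ2, hQ3]
  have hApos : (0:ℝ) < A := by
    have h1 : a t0.1 ^ 2 ≤ A := by
      rw [hA]
      exact Finset.single_le_sum (fun x _ => sq_nonneg (a x)) (Finset.mem_univ t0.1)
    nlinarith [hRpos t0 ht0]
  have hBpos : (0:ℝ) < B := by
    have h1 : b t0.2.1 ^ 2 ≤ B := by
      rw [hB]
      exact Finset.single_le_sum (fun y _ => sq_nonneg (b y)) (Finset.mem_univ t0.2.1)
    nlinarith [hSpos t0 ht0]
  have hCpos : (0:ℝ) < C := by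
    have h1 : c t0.2.2 ^ 2 ≤ C := by
      rw [hC]
      exact Finset.single_le_sum (fun z _ => sq_nonneg (c z)) (Finset.mem_univ t0.2.2)
    nlinarith [hTpos t0 ht0]
  have hdiv : 3 * Real.log N ≤ Real.log A + Real.log B + Real.log C :=
    le_of_mul_le_mul_left
      (by linarith [hmain] :
        N * (3 * Real.log N) ≤ N * (Real.log A + Real.log B + Real.log C)) hNpos
  have hlogs : Real.log (N ^ (3:ℕ)) ≤ Real.log (A * B * C) := by
    rw [Real.log_pow, Real.log_mul (mul_pos hApos hBpos).ne' hCpos.ne',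
      Real.log_mul hApos.ne' hBpos.ne']
    push_cast
    linarith [hdiv]
  have hcube : N ^ (3:ℕ) ≤ A * B * C :=
    (Real.log_le_log_iff (pow_pos hNpos 3) (mul_pos (mul_pos hApos hBpos) hCpos)).1 hlogs
  exact cube_root_bound hNpos hcube
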